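/- The set SO*(n) of special orthogonal n×n matrices not having -1 as an eigenvalue is path-connected: for any P ∈ SO*(n) there is a continuous path A(t), 0 ≤ t ≤ 1, in SO*(n) with A(0) = I and A(1) = P. -/

import Mathlib

open Matrix

private lemma commute_nonsing_inv {n : ℕ} {A B : Matrix (Fin n) (Fin n) ℝ}
    (h : IsUnit B.det) (hc : A * B = B * A) : A * B⁻¹ = B⁻¹ * A := by
  letI := B.invertibleOfIsUnitDet h
  have hcm : Commute A B := hc
  have := hcm.invOf_right
  rwa [Matrix.invOf_eq_nonsing_inv] at this

/-- For a skew-symmetric real matrix `S`, the matrix `1 + t • S` is invertible. -/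
private lemma skew_unit {n : ℕ} {S : Matrix (Fin n) (Fin n) ℝ} (hS : Sᵀ = -S) (t : ℝ) :
    IsUnit ((1 : Matrix (Fin n) (Fin n) ℝ) + t • S).det := by
  rw [isUnit_iff_ne_zero]
  intro h
  obtain ⟨v, hv, hv0⟩ := (Matrix.exists_mulVec_eq_zero_iff).mpr h
  have hq : v ⬝ᵥ (S *ᵥ v) = 0 := by
    have h1 : v ⬝ᵥ (S *ᵥ v) = (Sᵀ *ᵥ v) ⬝ᵥ v := by
      rw [Matrix.dotProduct_mulVec, Matrix.mulVec_transpose]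
    rw [hS] at h1
    have h2 : ((-S) *ᵥ v) ⬝ᵥ v = -(v ⬝ᵥ (S *ᵥ v)) := by
      rw [Matrix.neg_mulVec, neg_dotProduct, dotProduct_comm]
    rw [h2] at h1
    linarith
  have h3 : v ⬝ᵥ (((1 : Matrix (Fin n) (Fin n) ℝ) + t • S) *ᵥ v) = 0 := by
    rw [hv0, dotProduct_zero]
  rw [Matrix.add_mulVec, Matrix.one_mulVec, Matrix.smul_mulVec,
    dotProduct_add, dotProduct_smul, hq, smul_zero, add_zero] at h3
  exact hv (dotProduct_self_eq_zero.mp h3)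

/-- `SO*(n)`, the set of special orthogonal matrices without `-1` as an
eigenvalue, is path-connected: every element is joined to the identity by a
continuous path inside the set. -/
theorem SOstar_pathConnected {n : ℕ} :
    ∀ P ∈ {A : Matrix (Fin n) (Fin n) ℝ | Aᵀ * A = 1 ∧ A.det = 1 ∧ IsUnit (1 + A)},
      JoinedIn {A : Matrix (Fin n) (Fin n) ℝ | Aᵀ * A = 1 ∧ A.det = 1 ∧ IsUnit (1 + A)}
        (1 : Matrix (Fin n) (Fin n) ℝ) P := by
  rintro P ⟨horth, hdet, hunit⟩
  have hu : IsUnit ((1 : Matrix (Fin n) (Fin n) ℝ) + P).det :=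
    (Matrix.isUnit_iff_isUnit_det _).mp hunit
  set Q : Matrix (Fin n) (Fin n) ℝ := ((1 : Matrix (Fin n) (Fin n) ℝ) + P)⁻¹ with hQ
  set S : Matrix (Fin n) (Fin n) ℝ := ((1 : Matrix (Fin n) (Fin n) ℝ) - P) * Q with hSdef
  -- skew-symmetry of the Cayley transform S
  have hPtu : IsUnit (Pᵀ).det := by
    rw [Matrix.det_transpose, hdet]; exact isUnit_one
  have hcommP : ((1 : Matrix (Fin n) (Fin n) ℝ) - P) * (1 + P) = (1 + P) * (1 - P) := by
    noncomm_ring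
  have hskew : Sᵀ = -S := by
    have h1 : (1 : Matrix (Fin n) (Fin n) ℝ) + Pᵀ = Pᵀ * (1 + P) := by
      rw [Matrix.mul_add, Matrix.mul_one, horth, add_comm]
    have h2 : (1 : Matrix (Fin n) (Fin n) ℝ) - Pᵀ = Pᵀ * (P - 1) := by
      rw [Matrix.mul_sub, Matrix.mul_one, horth]
    calc Sᵀ = Qᵀ * ((1 : Matrix (Fin n) (Fin n) ℝ) - P)ᵀ := Matrix.transpose_mul _ _
      _ = ((1 : Matrix (Fin n) (Fin n) ℝ) + Pᵀ)⁻¹ * (1 - Pᵀ) := by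
          rw [hQ, Matrix.transpose_nonsing_inv, Matrix.transpose_add,
            Matrix.transpose_one, Matrix.transpose_sub, Matrix.transpose_one]
      _ = (Pᵀ * ((1 : Matrix (Fin n) (Fin n) ℝ) + P))⁻¹ * (Pᵀ * (P - 1)) := by
          rw [h1, h2]
      _ = ((1 : Matrix (Fin n) (Fin n) ℝ) + P)⁻¹ * (((Pᵀ)⁻¹ * Pᵀ) * (P - 1)) := by
          rw [Matrix.mul_inv_rev, Matrix.mul_assoc, Matrix.mul_assoc]
      _ = Q * (P - 1) := by
          rw [Matrix.nonsing_inv_mul _ hPtu, Matrix.one_mul, hQ]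
      _ = (P - 1) * Q := (commute_nonsing_inv hu (by noncomm_ring)).symm
      _ = -S := by rw [hSdef, ← Matrix.neg_mul, neg_sub]
  have hBu : ∀ t : ℝ, IsUnit ((1 : Matrix (Fin n) (Fin n) ℝ) + t • S).det :=
    skew_unit hskew
  have hBu' : ∀ t : ℝ, IsUnit ((1 : Matrix (Fin n) (Fin n) ℝ) - t • S).det := by
    intro t
    have := skew_unit hskew (-t)
    rwa [neg_smul, ← sub_eq_add_neg] at this
  -- the path
  set γ : ℝ → Matrix (Fin n) (Fin n) ℝ :=
    fun t => ((1 : Matrix (Fin n) (Fin n) ℝ) - t • S) * (1 + t • S)⁻¹ with hγ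
  have hcommS : ∀ t : ℝ, ((1 : Matrix (Fin n) (Fin n) ℝ) - t • S) * (1 + t • S)
      = (1 + t • S) * (1 - t • S) := by
    intro t; generalize t • S = A; noncomm_ring
  -- γ t lies in the set, for every t
  have hmem : ∀ t : ℝ, γ t ∈
      {A : Matrix (Fin n) (Fin n) ℝ | Aᵀ * A = 1 ∧ A.det = 1 ∧ IsUnit (1 + A)} := by
    intro t
    have htr : ((1 : Matrix (Fin n) (Fin n) ℝ) + t • S)ᵀ = 1 - t • S := by
      rw [Matrix.transpose_add, Matrix.transpose_one, Matrix.transpose_smul, hskew,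
        smul_neg, ← sub_eq_add_neg]
    have htr' : ((1 : Matrix (Fin n) (Fin n) ℝ) - t • S)ᵀ = 1 + t • S := by
      rw [Matrix.transpose_sub, Matrix.transpose_one, Matrix.transpose_smul, hskew,
        smul_neg, sub_neg_eq_add]
    refine ⟨?_, ?_, ?_⟩
    · -- orthogonality
      have hT : (γ t)ᵀ = ((1 : Matrix (Fin n) (Fin n) ℝ) - t • S)⁻¹ * (1 + t • S) := by
        simp only [hγ]
        rw [Matrix.transpose_mul, Matrix.transpose_nonsing_inv, htr, htr']
      show (γ t)ᵀ * γ t = 1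
      rw [hT]
      simp only [hγ]
      calc ((1 : Matrix (Fin n) (Fin n) ℝ) - t • S)⁻¹ * (1 + t • S)
            * ((1 - t • S) * (1 + t • S)⁻¹)
          = ((1 : Matrix (Fin n) (Fin n) ℝ) - t • S)⁻¹ * (((1 + t • S) * (1 - t • S))
            * (1 + t • S)⁻¹) := by
            rw [Matrix.mul_assoc, Matrix.mul_assoc]
        _ = ((1 : Matrix (Fin n) (Fin n) ℝ) - t • S)⁻¹ * (((1 - t • S) * (1 + t • S))
            * (1 + t • S)⁻¹) := by rw [hcommS]
        _ = (((1 : Matrix (Fin n) (Fin n) ℝ) - t • S)⁻¹ * (1 - t • S))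
            * ((1 + t • S) * (1 + t • S)⁻¹) := by
            rw [Matrix.mul_assoc, Matrix.mul_assoc]
        _ = 1 := by
            rw [Matrix.nonsing_inv_mul _ (hBu' t), Matrix.mul_nonsing_inv _ (hBu t),
              Matrix.one_mul]
    · -- determinant
      have hdd : ((1 : Matrix (Fin n) (Fin n) ℝ) + t • S).det = (1 - t • S).det := by
        rw [← Matrix.det_transpose ((1 : Matrix (Fin n) (Fin n) ℝ) + t • S), htr]
      show (γ t).det = 1
      simp only [hγ]
      rw [Matrix.det_mul, Matrix.det_nonsing_inv, hdd, Ring.mul_inverse_cancel _ (hBu' t)]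
    · -- `1 + γ t` is invertible
      show IsUnit (1 + γ t)
      have h1 : (1 : Matrix (Fin n) (Fin n) ℝ) + γ t
          = ((1 + t • S) + (1 - t • S)) * (1 + t • S)⁻¹ := by
        simp only [hγ]
        rw [Matrix.add_mul, Matrix.mul_nonsing_inv _ (hBu t)]
      have h2 : ((1 : Matrix (Fin n) (Fin n) ℝ) + t • S) + (1 - t • S)
          = (2 : ℝ) • (1 : Matrix (Fin n) (Fin n) ℝ) := by
        rw [two_smul]; abel
      rw [Matrix.isUnit_iff_isUnit_det, h1, h2, Matrix.smul_mul, Matrix.one_mul,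
        Matrix.det_smul]
      refine IsUnit.mul (isUnit_iff_ne_zero.mpr (by positivity)) ?_
      exact IsUnit.of_mul_eq_one _ (Matrix.det_nonsing_inv_mul_det _ (hBu t))
  -- endpoints
  have hγ0 : γ 0 = 1 := by
    simp only [hγ]; simp
  have hS1 : (1 : ℝ) • S = S := one_smul _ _
  have hγ1 : γ 1 = P := by
    have huS : IsUnit ((1 : Matrix (Fin n) (Fin n) ℝ) + S).det := by
      rw [← hS1]; exact hBu 1
    have hkey : ((1 : Matrix (Fin n) (Fin n) ℝ) + P) * S = 1 - P := by
      calc ((1 : Matrix (Fin n) (Fin n) ℝ) + P) * S = (1 + P) * ((1 - P) * Q) := by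
            rw [hSdef]
        _ = (((1 : Matrix (Fin n) (Fin n) ℝ) - P) * (1 + P)) * Q := by
            rw [← Matrix.mul_assoc, ← hcommP]
        _ = ((1 : Matrix (Fin n) (Fin n) ℝ) - P) * ((1 + P) * Q) := by
            rw [Matrix.mul_assoc]
        _ = 1 - P := by rw [hQ, Matrix.mul_nonsing_inv _ hu, Matrix.mul_one]
    have hPS : P * S = 1 - P - S := by
      rw [Matrix.add_mul, Matrix.one_mul] at hkey
      rw [← hkey]; abel
    have hfin : ((1 : Matrix (Fin n) (Fin n) ℝ) - S) = P * (1 + S) := by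
      rw [Matrix.mul_add, Matrix.mul_one, hPS]; abel
    calc γ 1 = ((1 : Matrix (Fin n) (Fin n) ℝ) - S) * (1 + S)⁻¹ := by
          simp only [hγ, hS1]
      _ = (P * ((1 : Matrix (Fin n) (Fin n) ℝ) + S)) * (1 + S)⁻¹ := by rw [hfin]
      _ = P * (((1 : Matrix (Fin n) (Fin n) ℝ) + S) * (1 + S)⁻¹) := by
          rw [Matrix.mul_assoc]
      _ = P := by rw [Matrix.mul_nonsing_inv _ huS, Matrix.mul_one]
  -- continuity
  have hcont : Continuous γ := by
    have c1 : Continuous fun t : ℝ => (1 : Matrix (Fin n) (Fin n) ℝ) + t • S :=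
      continuous_const.add (continuous_id.smul continuous_const)
    have c2 : Continuous fun t : ℝ => (1 : Matrix (Fin n) (Fin n) ℝ) - t • S :=
      continuous_const.sub (continuous_id.smul continuous_const)
    have hne : ∀ t : ℝ, ((1 : Matrix (Fin n) (Fin n) ℝ) + t • S).det ≠ 0 :=
      fun t => (hBu t).ne_zero
    have hrw : γ = fun t : ℝ =>
        ((1 : Matrix (Fin n) (Fin n) ℝ) - t • S) *
          ((((1 : Matrix (Fin n) (Fin n) ℝ) + t • S).det)⁻¹ •
            ((1 : Matrix (Fin n) (Fin n) ℝ) + t • S).adjugate) := by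
      funext t
      simp only [hγ]
      rw [Matrix.inv_def, Ring.inverse_eq_inv]
    rw [hrw]
    exact c2.mul ((c1.matrix_det.inv₀ hne).smul c1.matrix_adjugate)
  exact ⟨⟨⟨fun x => γ x, hcont.comp continuous_subtype_val⟩, hγ0, hγ1⟩,
    fun x => hmem x⟩
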